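/- Let 0 < θ < ε ≤ 1 and let N be a natural number with N ≥ 1/(ε² − θ²). If A₀, …, A_{N−1} are measurable events in a probability space (Ω, Σ, μ) satisfying μ(A_i) ≥ ε for every i ∈ {0, …, N−1}, then there exist i, j ∈ {0, …, N−1} with i ≠ j such that μ(A_i ∩ A_j) ≥ θ². -/

import Mathlib

open MeasureTheory

theorem stmt0 {Ω : Type*} [MeasurableSpace Ω] (μ : Measure Ω) [IsProbabilityMeasure μ]
    (θ ε : ℝ) (hθ : 0 < θ) (hθε : θ < ε) (hε : ε ≤ 1)
    (N : ℕ) (hN : 1 / (ε ^ 2 - θ ^ 2) ≤ (N : ℝ))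
    (A : ℕ → Set Ω) (hmeas : ∀ i < N, MeasurableSet (A i))
    (hA : ∀ i < N, ε ≤ (μ (A i)).toReal) :
    ∃ i < N, ∃ j < N, i ≠ j ∧ θ ^ 2 ≤ (μ (A i ∩ A j)).toReal := by
  by_contra hcon
  push_neg at hcon
  have hsub : 0 < ε ^ 2 - θ ^ 2 := by nlinarith
  have hN1 : (1 : ℝ) ≤ (N : ℝ) * (ε ^ 2 - θ ^ 2) := by
    rw [div_le_iff₀ hsub] at hN
    linarith
  have hn0 : (0 : ℝ) < (N : ℝ) := by nlinarith
  set g : Ω → ℝ := fun ω => ∑ i ∈ Finset.range N, (A i).indicator (fun _ => (1:ℝ)) ω with hg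
  have hmeas' : ∀ i ∈ Finset.range N, MeasurableSet (A i) := fun i hi =>
    hmeas i (Finset.mem_range.mp hi)
  have hint : ∀ i ∈ Finset.range N, Integrable ((A i).indicator (fun _ => (1:ℝ))) μ :=
    fun i hi => (integrable_const (1:ℝ)).indicator (hmeas' i hi)
  have hg_int : Integrable g μ := integrable_finset_sum _ hint
  -- the square as a double sum of indicators
  have hg2 : ∀ ω, g ω ^ 2 = ∑ i ∈ Finset.range N, ∑ j ∈ Finset.range N,
      (A i ∩ A j).indicator (fun _ => (1:ℝ)) ω := by
    intro ω
    rw [hg, sq, Finset.sum_mul_sum]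
    refine Finset.sum_congr rfl fun i _ => Finset.sum_congr rfl fun j _ => ?_
    by_cases h1 : ω ∈ A i <;> by_cases h2 : ω ∈ A j <;>
      simp [Set.indicator_apply, h1, h2]
  set S1 : ℝ := ∑ i ∈ Finset.range N, (μ (A i)).toReal with hS1
  set S2 : ℝ := ∑ i ∈ Finset.range N, ∑ j ∈ Finset.range N, (μ (A i ∩ A j)).toReal with hS2
  have hIg : ∫ ω, g ω ∂μ = S1 := by
    rw [hg, integral_finset_sum _ hint]
    refine Finset.sum_congr rfl fun i hi => ?_
    rw [integral_indicator_const _ (hmeas' i hi)]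
    simp [Measure.real]
  have hint2 : ∀ i ∈ Finset.range N, ∀ j ∈ Finset.range N,
      Integrable ((A i ∩ A j).indicator (fun _ => (1:ℝ))) μ :=
    fun i hi j hj => (integrable_const (1:ℝ)).indicator ((hmeas' i hi).inter (hmeas' j hj))
  have hg2_int : Integrable (fun ω => g ω ^ 2) μ := by
    have : (fun ω => g ω ^ 2) = fun ω => ∑ i ∈ Finset.range N, ∑ j ∈ Finset.range N,
        (A i ∩ A j).indicator (fun _ => (1:ℝ)) ω := funext hg2
    rw [this]
    exact integrable_finset_sum _ fun i hi => integrable_finset_sum _ fun j hj => hint2 i hi j hj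
  have hIg2 : ∫ ω, g ω ^ 2 ∂μ = S2 := by
    rw [funext hg2, integral_finset_sum _ fun i hi =>
      integrable_finset_sum _ fun j hj => hint2 i hi j hj]
    refine Finset.sum_congr rfl fun i hi => ?_
    rw [integral_finset_sum _ fun j hj => hint2 i hi j hj]
    refine Finset.sum_congr rfl fun j hj => ?_
    rw [integral_indicator_const _ ((hmeas' i hi).inter (hmeas' j hj))]
    simp [Measure.real]
  -- lower bound on S1
  have hS1lb : ε * N ≤ S1 := by
    calc ε * N = ∑ _i ∈ Finset.range N, ε := by
          rw [Finset.sum_const, Finset.card_range, nsmul_eq_mul]; ring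
      _ ≤ S1 := Finset.sum_le_sum fun i hi => hA i (Finset.mem_range.mp hi)
  -- second moment lower bound: (εN)² ≤ S2
  set a : ℝ := ε * N with ha
  have hkey : ∀ ω, 2 * a * g ω - a ^ 2 ≤ g ω ^ 2 := by
    intro ω; nlinarith [sq_nonneg (g ω - a)]
  have hlin_int : Integrable (fun ω => 2 * a * g ω - a ^ 2) μ :=
    ((hg_int.const_mul (2 * a)).sub (integrable_const _))
  have hmono : ∫ ω, (2 * a * g ω - a ^ 2) ∂μ ≤ ∫ ω, g ω ^ 2 ∂μ :=
    integral_mono hlin_int hg2_int hkey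
  have hIlin : ∫ ω, (2 * a * g ω - a ^ 2) ∂μ = 2 * a * S1 - a ^ 2 := by
    rw [integral_sub (hg_int.const_mul (2 * a)) (integrable_const _),
      integral_const_mul, hIg, integral_const]
    simp
  have ha0 : 0 ≤ a := by rw [ha]; exact mul_nonneg (by linarith) (Nat.cast_nonneg N)
  have hS2lb : a ^ 2 ≤ S2 := by
    rw [hIlin, hIg2] at hmono
    nlinarith
  -- upper bound on S2 from the contradiction hypothesis
  have hS2ub : S2 ≤ (N : ℝ) * ((N : ℝ) * θ ^ 2 + (1 - θ ^ 2)) := by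
    have hrow : ∀ i ∈ Finset.range N, ∑ j ∈ Finset.range N, (μ (A i ∩ A j)).toReal
        ≤ (N : ℝ) * θ ^ 2 + (1 - θ ^ 2) := by
      intro i hi
      have step1 : ∑ j ∈ Finset.range N, (μ (A i ∩ A j)).toReal
          ≤ ∑ j ∈ Finset.range N, (if i = j then (1:ℝ) else θ ^ 2) := by
        refine Finset.sum_le_sum fun j hj => ?_
        by_cases h : i = j
        · simp only [h, if_pos rfl]
          have : μ (A j ∩ A j) ≤ 1 := le_trans (measure_mono (Set.inter_subset_left))
            prob_le_one
          have := ENNReal.toReal_mono ENNReal.one_ne_top this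
          simpa using this
        · rw [if_neg h]
          exact le_of_lt (hcon i (Finset.mem_range.mp hi) j (Finset.mem_range.mp hj) h)
      have step2 : ∑ j ∈ Finset.range N, (if i = j then (1:ℝ) else θ ^ 2)
          = (N : ℝ) * θ ^ 2 + (1 - θ ^ 2) := by
        have he : ∀ j, (if i = j then (1:ℝ) else θ ^ 2)
            = θ ^ 2 + (if j = i then 1 - θ ^ 2 else 0) := by
          intro j
          by_cases h : i = j
          · simp [h]
          · simp [h, Ne.symm h]
        simp_rw [he]
        rw [Finset.sum_add_distrib, Finset.sum_const, Finset.card_range,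
          Finset.sum_ite_eq' (Finset.range N) i (fun _ => 1 - θ ^ 2), if_pos hi,
          nsmul_eq_mul]
      linarith
    calc S2 ≤ ∑ _i ∈ Finset.range N, ((N : ℝ) * θ ^ 2 + (1 - θ ^ 2)) :=
          Finset.sum_le_sum hrow
      _ = (N : ℝ) * ((N : ℝ) * θ ^ 2 + (1 - θ ^ 2)) := by
          rw [Finset.sum_const, Finset.card_range, nsmul_eq_mul]
  -- final contradiction
  have : a ^ 2 ≤ (N : ℝ) * ((N : ℝ) * θ ^ 2 + (1 - θ ^ 2)) := le_trans hS2lb hS2ub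
  rw [ha] at this
  nlinarith [sq_nonneg θ, mul_pos hn0 (mul_pos hn0 hsub)]
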